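/- Witt decomposition in 𝕆 ⊗ Cl_{8n}: let n ≥ 1 and X = Σ_{l=0}^{8n−1} x_l·b_l ∈ ℝ^{8n}. For k = 0,…,n−1 set p^k := Σ_{m=0}^{7} x_{8k+m}·e_m ∈ 𝕆. Then 1 ⊗ ι(X) = (1/8)·Σ_{k=0}^{n−1} Σ_{i=0}^{7} f_i^k·(J_i(p^k) ⊗ 1) in 𝕆 ⊗ Cl_{8n}. -/

import Mathlib

noncomputable section

open scoped Quaternion TensorProduct

/-- The octonions, realized as the Cayley–Dickson double of the quaternions. -/
def Oct : Type := ℍ × ℍ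

namespace Oct

instance : AddCommGroup Oct := (inferInstance : AddCommGroup (ℍ × ℍ))
instance : Module ℝ Oct := (inferInstance : Module ℝ (ℍ × ℍ))

/-- First (quaternionic) component. -/
def x (p : Oct) : ℍ := Prod.fst p
/-- Second (quaternionic) component. -/
def y (p : Oct) : ℍ := Prod.snd p
/-- Build an octonion from two quaternions. -/
def mk (a b : ℍ) : Oct := ((a, b) : ℍ × ℍ)

@[simp] lemma x_mk (a b : ℍ) : (mk a b).x = a := rfl
@[simp] lemma y_mk (a b : ℍ) : (mk a b).y = b := rfl
@[simp] lemma x_add (p q : Oct) : (p + q).x = p.x + q.x := rfl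
@[simp] lemma y_add (p q : Oct) : (p + q).y = p.y + q.y := rfl
@[simp] lemma x_smul (r : ℝ) (p : Oct) : (r • p).x = r • p.x := rfl
@[simp] lemma y_smul (r : ℝ) (p : Oct) : (r • p).y = r • p.y := rfl
@[simp] lemma x_zero : (0 : Oct).x = 0 := rfl
@[simp] lemma y_zero : (0 : Oct).y = 0 := rfl

@[ext] lemma ext {p q : Oct} (h1 : p.x = q.x) (h2 : p.y = q.y) : p = q :=
  Prod.ext h1 h2

/-- Cayley–Dickson multiplication: `(a,b)·(c,d) = (a·c − conj(d)·b, d·a + b·conj(c))`. -/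
instance : Mul Oct :=
  ⟨fun p q => mk (p.x * q.x - star q.y * p.y) (q.y * p.x + p.y * star q.x)⟩

instance : One Oct := ⟨mk 1 0⟩

@[simp] lemma x_mul (p q : Oct) : (p * q).x = p.x * q.x - star q.y * p.y := rfl
@[simp] lemma y_mul (p q : Oct) : (p * q).y = q.y * p.x + p.y * star q.x := rfl
@[simp] lemma x_one : (1 : Oct).x = 1 := rfl
@[simp] lemma y_one : (1 : Oct).y = 0 := rfl

instance : NonUnitalNonAssocRing Oct :=
  { (inferInstance : AddCommGroup Oct) with
    mul := (· * ·)
    left_distrib := by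
      intro p q r
      refine ext ?_ ?_ <;>
        simp only [x_mul, y_mul, x_add, y_add, star_add] <;> noncomm_ring
    right_distrib := by
      intro p q r
      refine ext ?_ ?_ <;>
        simp only [x_mul, y_mul, x_add, y_add, star_add] <;> noncomm_ring
    zero_mul := by
      intro p
      refine ext ?_ ?_ <;> simp only [x_mul, y_mul, x_zero, y_zero, star_zero] <;> simp
    mul_zero := by
      intro p
      refine ext ?_ ?_ <;> simp only [x_mul, y_mul, x_zero, y_zero, star_zero] <;> simp }

instance : SMulCommClass ℝ Oct Oct where
  smul_comm r p q := by
    show r • (p * q) = p * (r • q)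
    refine ext ?_ ?_ <;>
      simp [x_mul, y_mul, smul_sub, smul_add, mul_smul_comm, smul_mul_assoc,
        star_smul, star_trivial]

instance : IsScalarTower ℝ Oct Oct where
  smul_assoc r p q := by
    show (r • p) * q = r • (p * q)
    refine ext ?_ ?_ <;>
      simp [x_mul, y_mul, smul_sub, smul_add, mul_smul_comm, smul_mul_assoc,
        star_smul, star_trivial]

/-- Octonionic conjugation: `conj (a,b) = (conj a, −b)`. -/
def conj (p : Oct) : Oct := mk (star p.x) (-p.y)

/-- The real part of an octonion. -/
def re (p : Oct) : ℝ := p.x.re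

/-- The standard basis `e_0, …, e_7` of the octonions. -/
def e : Fin 8 → Oct :=
  ![mk 1 0, mk ⟨0, 1, 0, 0⟩ 0, mk ⟨0, 0, 1, 0⟩ 0, mk ⟨0, 0, 0, 1⟩ 0,
    mk 0 1, mk 0 ⟨0, 1, 0, 0⟩, mk 0 ⟨0, 0, 1, 0⟩, mk 0 ⟨0, 0, 0, 1⟩]

/-- The real coordinates of an octonion with respect to the standard basis. -/
def coord : Fin 8 → Oct → ℝ :=
  ![fun p => p.x.re, fun p => p.x.imI, fun p => p.x.imJ, fun p => p.x.imK,
    fun p => p.y.re, fun p => p.y.imI, fun p => p.y.imJ, fun p => p.y.imK]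

lemma coord_add (j : Fin 8) (p q : Oct) :
    coord j (p + q) = coord j p + coord j q := by fin_cases j <;> rfl

lemma coord_smul (j : Fin 8) (r : ℝ) (p : Oct) :
    coord j (r • p) = r * coord j p := by fin_cases j <;> rfl

/-- The binary "dot product" `⟨i,j⟩ = i₁j₁ + i₂j₂ + i₃j₃` of binary digits. -/
def bdot (i j : Fin 8) : ℕ :=
  ((i.val.testBit 0 && j.val.testBit 0).toNat +
   (i.val.testBit 1 && j.val.testBit 1).toNat +
   (i.val.testBit 2 && j.val.testBit 2).toNat) % 2

/-- The involution `J_i`, the ℝ-linear map determined by `J_i(e_j) = (−1)^{⟨i,j⟩} e_j`. -/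
def J (i : Fin 8) : Oct →ₗ[ℝ] Oct where
  toFun p := ∑ j : Fin 8, ((-1 : ℝ) ^ bdot i j * coord j p) • e j
  map_add' p q := by
    simp only [coord_add, mul_add, add_smul]
    rw [Finset.sum_add_distrib]
  map_smul' r p := by
    simp only [coord_smul, RingHom.id_apply, Finset.smul_sum, smul_smul, mul_left_comm]

/-- The sign `σ(j,i)` defined by `J_j(conj e_i) = (−1)^{σ(j,i)} e_i`. -/
def sigma (j i : Fin 8) : ℕ := if i = 0 then 0 else (bdot j i + 1) % 2

end Oct

/-- The quadratic form `Q(v) = −‖v‖²` on `ℝ^{8n}`. -/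
def Qn (n : ℕ) : QuadraticForm ℝ (EuclideanSpace ℝ (Fin (8 * n))) :=
  - LinearMap.BilinMap.toQuadraticMap
      (innerₗ (EuclideanSpace ℝ (Fin (8 * n))) : LinearMap.BilinForm ℝ (EuclideanSpace ℝ (Fin (8 * n))))

/-- The Clifford algebra `Cl_{8n}` of `Q(v) = −‖v‖²` on `ℝ^{8n}`. -/
abbrev Cln (n : ℕ) := CliffordAlgebra (Qn n)

/-- The index `8k + m` of `ℝ^{8n}`. -/
def idx (n : ℕ) (k : Fin n) (m : Fin 8) : Fin (8 * n) :=
  ⟨8 * k.val + m.val, by omega⟩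

/-- The Clifford generators `g_l := ι(b_l)` of `Cl_{8n}`. -/
def gn (n : ℕ) (l : Fin (8 * n)) : Cln n :=
  CliffordAlgebra.ι (Qn n) (EuclideanSpace.single l 1)

/-- The elements `Ω_k := Σ_m conj(e_m) ⊗ g_{8k+m}` of `𝕆 ⊗ Cl_{8n}`. -/
def OmegaN (n : ℕ) (k : Fin n) : Oct ⊗[ℝ] Cln n :=
  ∑ m : Fin 8, (Oct.e m).conj ⊗ₜ[ℝ] gn n (idx n k m)

/-- The octonionic Witt basis `f_i^k := (J_i ⊗ id)(Ω_k)` of `𝕆 ⊗ Cl_{8n}`. -/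
def fN (n : ℕ) (i : Fin 8) (k : Fin n) : Oct ⊗[ℝ] Cln n :=
  TensorProduct.map (Oct.J i) LinearMap.id (OmegaN n k)

/-- The octonion `p^k := Σ_m x_{8k+m}·e_m` built from the `k`-th block of `X ∈ ℝ^{8n}`. -/
def pslice (n : ℕ) (X : EuclideanSpace ℝ (Fin (8 * n))) (k : Fin n) : Oct :=
  ∑ m : Fin 8, X (idx n k m) • Oct.e m

lemma coord_e (j j' : Fin 8) : Oct.coord j' (Oct.e j) = if j' = j then 1 else 0 := by
  fin_cases j <;> fin_cases j' <;> rfl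

lemma J_e (i j : Fin 8) : Oct.J i (Oct.e j) = ((-1:ℝ)^Oct.bdot i j) • Oct.e j := by
  simp [Oct.J, coord_e, mul_ite, ite_smul, Finset.sum_ite_eq']
lemma oct_ext {p q : Oct} (h : ∀ j : Fin 8, Oct.coord j p = Oct.coord j q) : p = q := by
  refine Oct.ext (QuaternionAlgebra.ext (h 0) (h 1) (h 2) (h 3))
    (QuaternionAlgebra.ext (h 4) (h 5) (h 6) (h 7))

lemma coord_conj_e (j m : Fin 8) :
    Oct.coord j (Oct.e m).conj
      = (if m = 0 then (1:ℝ) else -1) * Oct.coord j (Oct.e m) := by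
  fin_cases m <;> fin_cases j <;> norm_num [Oct.coord, Oct.conj, Oct.e, Fin.ext_iff] <;> norm_num [Oct.mk, Oct.x, Oct.y]

lemma conj_e (m : Fin 8) :
    (Oct.e m).conj = (if m = 0 then (1:ℝ) else -1) • Oct.e m := by
  refine oct_ext fun j => ?_
  rw [Oct.coord_smul, coord_conj_e]
lemma x_pair (a b : ℍ) : Oct.x ((a, b) : ℍ × ℍ) = a := rfl
lemma y_pair (a b : ℍ) : Oct.y ((a, b) : ℍ × ℍ) = b := rfl

set_option maxHeartbeats 2000000 in
lemma e_mul_self (m : Fin 8) :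
    Oct.e m * Oct.e m = (if m = 0 then (1:ℝ) else -1) • (1 : Oct) := by
  refine oct_ext fun j => ?_
  rw [Oct.coord_smul]
  fin_cases m <;> fin_cases j <;>
    norm_num [Oct.coord, Oct.e, Fin.ext_iff, Oct.x_mul, Oct.y_mul,
      Quaternion.re_mul, Quaternion.imI_mul, Quaternion.imJ_mul, Quaternion.imK_mul] <;> norm_num [Oct.mk, Oct.x, Oct.y]
lemma neg_one_pow_bdot (i j : Fin 8) :
    ((-1:ℝ)) ^ Oct.bdot i j = if Oct.bdot i j = 0 then 1 else -1 := by
  have h : Oct.bdot i j < 2 := Nat.mod_lt _ (by norm_num)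
  interval_cases h : Oct.bdot i j <;> simp [h]

set_option maxHeartbeats 1000000 in
lemma sum_sign (m m' : Fin 8) :
    ∑ i : Fin 8, ((-1:ℝ) ^ Oct.bdot i m * (-1:ℝ) ^ Oct.bdot i m')
      = if m = m' then 8 else 0 := by
  fin_cases m <;> fin_cases m' <;>
    · simp (config := { decide := true }) only [Fin.sum_univ_eight, neg_one_pow_bdot]
      norm_num [Fin.ext_iff]
lemma key (m m' : Fin 8) :
    ∑ i : Fin 8, Oct.J i (Oct.e m).conj * Oct.J i (Oct.e m')
      = if m = m' then (8:ℝ) • (1 : Oct) else 0 := by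
  have h1 : ∀ i : Fin 8, Oct.J i (Oct.e m).conj * Oct.J i (Oct.e m')
      = ((-1:ℝ) ^ Oct.bdot i m * (-1:ℝ) ^ Oct.bdot i m')
          • ((if m = 0 then (1:ℝ) else -1) • (Oct.e m * Oct.e m')) := by
    intro i
    rw [conj_e, map_smul, J_e, J_e, smul_smul, smul_mul_assoc, mul_smul_comm,
      smul_smul, smul_smul]
    ring_nf
  rw [Finset.sum_congr rfl fun i _ => h1 i, ← Finset.sum_smul, sum_sign]
  by_cases h : m = m'
  · subst h
    rw [e_mul_self, if_pos rfl, smul_smul, smul_smul]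
    by_cases h0 : m = 0 <;> simp [h0] <;> norm_num
  · rw [if_neg h, if_neg h, zero_smul]
lemma sum_idx {M : Type*} [AddCommMonoid M] (n : ℕ) (F : Fin (8 * n) → M) :
    ∑ l, F l = ∑ k : Fin n, ∑ m : Fin 8, F (idx n k m) := by
  have h2 := Fintype.sum_prod_type (f := fun p : Fin n × Fin 8 => F (idx n p.1 p.2))
  rw [← h2]
  refine (Fintype.sum_bijective (fun p : Fin n × Fin 8 => idx n p.1 p.2) ?_
    (fun p => F (idx n p.1 p.2)) F fun p => rfl).symm
  rw [Fintype.bijective_iff_injective_and_card]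
  constructor
  · rintro ⟨k, m⟩ ⟨k', m'⟩ h
    have h' : 8 * k.val + m.val = 8 * k'.val + m'.val := congrArg Fin.val h
    have hm := m.isLt; have hm' := m'.isLt
    have : k.val = k'.val ∧ m.val = m'.val := by omega
    exact Prod.ext (Fin.ext this.1) (Fin.ext this.2)
  · simp [mul_comm]

lemma iota_X (n : ℕ) (X : EuclideanSpace ℝ (Fin (8 * n))) :
    CliffordAlgebra.ι (Qn n) X = ∑ l, X l • gn n l := by
  have hX : X = ∑ l, X l • EuclideanSpace.single l (1:ℝ) := by
    have h := (EuclideanSpace.basisFun (Fin (8 * n)) ℝ).sum_repr X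
    simp only [EuclideanSpace.basisFun_apply, EuclideanSpace.basisFun_repr] at h
    exact h.symm
  conv_lhs => rw [hX]
  simp [gn]
lemma hterm (n : ℕ) (X : EuclideanSpace ℝ (Fin (8 * n))) (k : Fin n) :
    ∑ i : Fin 8, fN n i k * (Oct.J i (pslice n X k) ⊗ₜ[ℝ] (1 : Cln n))
      = ∑ m : Fin 8, (8 * X (idx n k m)) • ((1:Oct) ⊗ₜ[ℝ] gn n (idx n k m)) := by
  have hA : ∀ i : Fin 8, fN n i k * (Oct.J i (pslice n X k) ⊗ₜ[ℝ] (1 : Cln n))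
      = ∑ m : Fin 8, ∑ m' : Fin 8, X (idx n k m') •
          ((Oct.J i (Oct.e m).conj * Oct.J i (Oct.e m')) ⊗ₜ[ℝ] gn n (idx n k m)) := by
    intro i
    rw [fN, OmegaN, map_sum, Finset.sum_mul]
    refine Finset.sum_congr rfl fun m _ => ?_
    rw [TensorProduct.map_tmul]
    have hp : Oct.J i (pslice n X k) = ∑ m' : Fin 8, X (idx n k m') • Oct.J i (Oct.e m') := by
      rw [pslice, map_sum]; simp
    rw [hp, TensorProduct.sum_tmul, Finset.mul_sum]
    refine Finset.sum_congr rfl fun m' _ => ?_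
    rw [← TensorProduct.smul_tmul', mul_smul_comm, Algebra.TensorProduct.tmul_mul_tmul, mul_one,
      LinearMap.id_apply]
  rw [Finset.sum_congr rfl fun i _ => hA i, Finset.sum_comm]
  refine Finset.sum_congr rfl fun m _ => ?_
  rw [Finset.sum_comm]
  have hB : ∀ m' : Fin 8, ∑ i : Fin 8, X (idx n k m') •
        ((Oct.J i (Oct.e m).conj * Oct.J i (Oct.e m')) ⊗ₜ[ℝ] gn n (idx n k m))
      = X (idx n k m') •
          ((if m = m' then (8:ℝ) • (1:Oct) else 0) ⊗ₜ[ℝ] gn n (idx n k m)) := by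
    intro m'
    rw [← Finset.smul_sum, ← TensorProduct.sum_tmul, key]
  simp only [hB]
  rw [Finset.sum_eq_single m]
  · rw [if_pos rfl,
      show ((8:ℝ) • (1:Oct)) ⊗ₜ[ℝ] gn n (idx n k m)
          = (8:ℝ) • ((1:Oct) ⊗ₜ[ℝ] gn n (idx n k m)) from (TensorProduct.smul_tmul' _ _ _).symm,
      smul_smul, mul_comm (X (idx n k m)) 8]
  · intro m' _ hne
    rw [if_neg (Ne.symm hne), TensorProduct.zero_tmul, smul_zero]
  · intro h; exact absurd (Finset.mem_univ m) h
/-- Witt decomposition in `𝕆 ⊗ Cl_{8n}`: for `n ≥ 1` and `X ∈ ℝ^{8n}`,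
`1 ⊗ ι(X) = (1/8)·Σ_{k<n} Σ_{i<8} f_i^k·(J_i(p^k) ⊗ 1)`. -/
theorem witt_decomposition_8n (n : ℕ) (hn : 1 ≤ n)
    (X : EuclideanSpace ℝ (Fin (8 * n))) :
    (1 : Oct) ⊗ₜ[ℝ] CliffordAlgebra.ι (Qn n) X
      = (8 : ℝ)⁻¹ • ∑ k : Fin n, ∑ i : Fin 8,
          fN n i k * (Oct.J i (pslice n X k) ⊗ₜ[ℝ] (1 : Cln n)) := by
  have h8 : ∀ k : Fin n, ∑ i : Fin 8, fN n i k * (Oct.J i (pslice n X k) ⊗ₜ[ℝ] (1 : Cln n))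
      = ∑ m : Fin 8, (8 * X (idx n k m)) • ((1:Oct) ⊗ₜ[ℝ] gn n (idx n k m)) := hterm n X
  simp only [h8]
  rw [iota_X, TensorProduct.tmul_sum]
  simp only [TensorProduct.tmul_smul]
  rw [sum_idx n (fun l => X l • ((1:Oct) ⊗ₜ[ℝ] gn n l)), Finset.smul_sum]
  refine Finset.sum_congr rfl fun k _ => ?_
  rw [Finset.smul_sum]
  refine Finset.sum_congr rfl fun m _ => ?_
  rw [smul_smul]
  congr 1
  ring
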